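/- Let S be a finite semigroup that is a strict left regular band of groups, with idempotent-power map ω (so ω(s·t) = (ω s)·(ω t) for all s,t). Then for all s, t ∈ S, s·t = ((ω s)·(ω t)·s)·((ω s)·(ω t)·t). (This is the identity showing that every strict LRBG is recovered from the presheaf of its maximal subgroups over its band of idempotents, via the transition morphisms given by left multiplication.) -/
import Mathlib

private lemma iter_idem {S : Type*} [Semigroup S] (x : S) (hx : x * x = x) :
    ∀ n : ℕ, (fun t => t * x)^[n] x = x := by
  intro n
  induction n with
  | zero => rfl
  | succ k ih => rw [Function.iterate_succ_apply', ih, hx]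

/-- In a finite *strict* LRBG,
`s·t = ((ω s)·(ω t)·s)·((ω s)·(ω t)·t)` for all `s, t`; this identity recovers the
semigroup from the presheaf of its maximal subgroups over its band of idempotents. -/
theorem strict_lrbg_product_via_presheaf {S : Type*} [Semigroup S] [Fintype S]
    (ω : S → S)
    (hidem : ∀ s : S, ω s * ω s = ω s)
    (hpow : ∀ s : S, ∃ n : ℕ, ω s = (fun t => t * s)^[n] s)
    (lrbg1 : ∀ s : S, ω s * s = s)
    (lrbg2 : ∀ s t : S, s * t * ω s = s * t)
    (hstrict : ∀ s t : S, ω (s * t) = ω s * ω t) :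
    ∀ s t : S, s * t = (ω s * ω t * s) * (ω s * ω t * t) := by
  have hfix : ∀ x : S, x * x = x → ω x = x := by
    intro x hx
    obtain ⟨n, hn⟩ := hpow x
    rw [hn, iter_idem x hx]
  intro s t
  set e := ω s * ω t with he
  have hωe : ω e = e := by
    rw [he, hstrict, hfix _ (hidem s), hfix _ (hidem t)]
  have h1 : e * s * e = e * s := by
    have := lrbg2 e s
    rwa [hωe] at this
  have h2 : e * (s * t) = s * t := by
    have := lrbg1 (s * t)
    rwa [hstrict] at this
  calc s * t = e * (s * t) := h2.symm
    _ = e * s * t := by rw [← mul_assoc]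
    _ = e * s * e * t := by rw [h1]
    _ = (e * s) * (e * t) := by rw [mul_assoc]
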